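/- Let z, u, y be indeterminates and set t = z·e^{-2z}. The power series G(u,y) = (1+u)·e^{2yz}·[u^≥]( e^{zu(y-1)+z y/u} - (1/u)·e^{z(y-1)/u + zyu} ), where [u^≥] extracts the terms of non-negative degree in u, satisfies the functional equation ∂G/∂y (u,y) = z(1+u)(1+1/u)·(G(u,y) - G(0,y)) together with the initial condition G(u,0) = (1+u)e^{-zu}. -/

import Mathlib

/-- The formal power series `exp(c·z)` in `z`, with coefficients `c^n/n!`. -/
noncomputable def expZ {A : Type*} [CommRing A] [Algebra ℚ A] (c : A) :
    PowerSeries A :=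
  PowerSeries.mk fun n => (n.factorial : ℚ)⁻¹ • c ^ n

/-- Non-negative part (in `u`) of a Laurent polynomial. -/
noncomputable def nonnegL (p : LaurentPolynomial ℚ) : LaurentPolynomial ℚ :=
  ∑ n ∈ p.coeff.support.filter (fun n => 0 ≤ n),
    LaurentPolynomial.C (p.coeff n) * LaurentPolynomial.T n

/-- Non-negative part in `u`, applied to each coefficient of a polynomial in `y`
whose coefficients are Laurent polynomials in `u`. -/
noncomputable def nonnegY (q : Polynomial (LaurentPolynomial ℚ)) :
    Polynomial (LaurentPolynomial ℚ) :=
  q.sum fun k c => Polynomial.C (nonnegL c) * Polynomial.X ^ k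

/-- Non-negative part in `u` of a power series in `z` whose coefficients are
polynomials in `y` with Laurent-polynomial coefficients in `u`. -/
noncomputable def nonnegS (f : PowerSeries (Polynomial (LaurentPolynomial ℚ))) :
    PowerSeries (Polynomial (LaurentPolynomial ℚ)) :=
  PowerSeries.mk fun n => nonnegY (PowerSeries.coeff n f)

/-- Coefficient-wise evaluation at `u = 0` (each coefficient of `G` being a
polynomial in `u`, this is extraction of the constant term in `u`). -/
noncomputable def evalU0 (q : Polynomial (LaurentPolynomial ℚ)) :
    Polynomial (LaurentPolynomial ℚ) :=
  q.sum fun k c => Polynomial.C (LaurentPolynomial.C (c.coeff 0)) * Polynomial.X ^ k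

/-! ### Auxiliary development -/

set_option maxRecDepth 10000

namespace StmtAux

open LaurentPolynomial PowerSeries

local notation "LQ" => LaurentPolynomial ℚ
local notation "RQ" => Polynomial (LaurentPolynomial ℚ)

/-- Extraction of the coefficient of `u^k`, as a constant Laurent polynomial. -/
noncomputable def slL (k : ℤ) (p : LQ) : LQ := LaurentPolynomial.C (p.coeff k)

lemma nonnegL_apply (p : LQ) (m : ℤ) :
    (nonnegL p).coeff m = if 0 ≤ m then p.coeff m else 0 := by
  rw [nonnegL, AddMonoidAlgebra.coeff_sum, Finset.sum_apply']
  simp only [← single_eq_C_mul_T, AddMonoidAlgebra.coeff_single, Finsupp.single_apply]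
  rw [Finset.sum_ite_eq' (p.coeff.support.filter (fun n => 0 ≤ n)) m (fun n => p.coeff n)]
  by_cases hm : 0 ≤ m
  · by_cases hp : p.coeff m = 0 <;> simp [Finset.mem_filter, hm, hp, Finsupp.mem_support_iff]
  · simp [Finset.mem_filter, hm]

lemma T_mul_apply (a : ℤ) (p : LQ) (m : ℤ) : ((T a : LQ) * p).coeff m = p.coeff (m - a) := by
  rw [show (T a : LQ) = AddMonoidAlgebra.single a 1 from rfl, AddMonoidAlgebra.coeff_single_mul_apply,
    one_mul, neg_add_eq_sub]

lemma slL_apply (k : ℤ) (p : LQ) (m : ℤ) : (slL k p).coeff m = if m = 0 then p.coeff k else 0 := by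
  rw [slL, LaurentPolynomial.C_apply]

lemma nonnegL_zero : nonnegL 0 = 0 := by
  ext m; simp [nonnegL_apply]

lemma slL_zero (k : ℤ) : slL k 0 = 0 := by
  rw [slL]; simp

lemma nonnegL_add (p q : LQ) : nonnegL (p + q) = nonnegL p + nonnegL q := by
  ext m
  rw [AddMonoidAlgebra.coeff_add, Finsupp.add_apply, nonnegL_apply, nonnegL_apply, nonnegL_apply,
    AddMonoidAlgebra.coeff_add, Finsupp.add_apply]
  split <;> simp

lemma nonnegL_sub (p q : LQ) : nonnegL (p - q) = nonnegL p - nonnegL q := by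
  ext m
  rw [AddMonoidAlgebra.coeff_sub, Finsupp.sub_apply, nonnegL_apply, nonnegL_apply, nonnegL_apply,
    AddMonoidAlgebra.coeff_sub, Finsupp.sub_apply]
  split <;> simp

lemma slL_add (k : ℤ) (p q : LQ) : slL (k) (p + q) = slL k p + slL k q := by
  rw [slL, slL, slL, AddMonoidAlgebra.coeff_add, Finsupp.add_apply, map_add]

lemma slL_sub (k : ℤ) (p q : LQ) : slL (k) (p - q) = slL k p - slL k q := by
  rw [slL, slL, slL, AddMonoidAlgebra.coeff_sub, Finsupp.sub_apply, map_sub]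

lemma nonnegL_T_one_mul (p : LQ) :
    nonnegL ((T 1 : LQ) * p) = (T 1 : LQ) * nonnegL p + slL (-1) p := by
  ext m
  rw [AddMonoidAlgebra.coeff_add, Finsupp.add_apply, nonnegL_apply, T_mul_apply, T_mul_apply, nonnegL_apply, slL_apply]
  rcases lt_trichotomy m 0 with h | h | h
  · rw [if_neg (by omega), if_neg (by omega), if_neg (by omega)]; ring
  · subst h; norm_num
  · rw [if_pos (by omega), if_pos (by omega), if_neg (by omega)]; ring

lemma nonnegL_T_negone_mul (p : LQ) :
    nonnegL ((T (-1) : LQ) * p)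
      = (T (-1) : LQ) * nonnegL p - (T (-1) : LQ) * LaurentPolynomial.C (p.coeff 0) := by
  ext m
  rw [AddMonoidAlgebra.coeff_sub, Finsupp.sub_apply, nonnegL_apply, T_mul_apply, T_mul_apply, T_mul_apply, nonnegL_apply,
    LaurentPolynomial.C_apply]
  rcases lt_trichotomy m (-1) with h | h | h
  · rw [if_neg (by omega), if_neg (by omega), if_neg (by omega)]; ring
  · subst_vars; norm_num
  · rw [if_pos (by omega), if_pos (by omega), if_neg (by omega)]; ring

lemma slL_T_mul (k a : ℤ) (p : LQ) : slL k ((T a : LQ) * p) = slL (k - a) p := by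
  rw [slL, slL, T_mul_apply]

lemma slL_zero_nonnegL (p : LQ) : slL 0 (nonnegL p) = slL 0 p := by
  rw [slL, slL, nonnegL_apply, if_pos le_rfl]

lemma slL_negone_nonnegL (p : LQ) : slL (-1) (nonnegL p) = 0 := by
  rw [slL, nonnegL_apply, if_neg (by omega), map_zero]

lemma hsingle (p : LQ) (r : ℚ) (k : ℤ) : (p * LaurentPolynomial.C r).coeff k = p.coeff k * r :=
  AddMonoidAlgebra.coeff_mul_single_zero p r k

lemma mul_C_comm (p : LQ) (r : ℚ) :
    nonnegL (p * LaurentPolynomial.C r) = nonnegL p * LaurentPolynomial.C r := by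
  ext m
  rw [hsingle, nonnegL_apply, nonnegL_apply, hsingle]
  split <;> simp

lemma slL_mul_C (k : ℤ) (p : LQ) (r : ℚ) :
    slL k (p * LaurentPolynomial.C r) = slL k p * LaurentPolynomial.C r := by
  rw [slL, slL, hsingle, map_mul]

noncomputable def σL : LQ ≃ₐ[ℚ] LQ := AddMonoidAlgebra.domCongr ℚ ℚ (AddEquiv.neg ℤ)

lemma σL_apply (p : LQ) (k : ℤ) : (σL p).coeff k = p.coeff (-k) := by
  rw [σL, AddMonoidAlgebra.coeff_domCongr]; simp

lemma σL_T (a : ℤ) : σL (T a) = T (-a) := by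
  rw [σL, LaurentPolynomial.T, AddMonoidAlgebra.domCongr_single]; rfl

lemma σL_C (r : ℚ) : σL (LaurentPolynomial.C r) = LaurentPolynomial.C r := by
  rw [σL, ← LaurentPolynomial.single_eq_C, AddMonoidAlgebra.domCongr_single]; rfl

lemma slL_σL (k : ℤ) (p : LQ) : slL k (σL p) = slL (-k) p := by
  rw [slL, slL, σL_apply]

/-! ### y-polynomial level -/

lemma coeff_liftY (φ : LQ → LQ) (hφ : φ 0 = 0) (q : RQ) (j : ℕ) :
    (q.sum fun k c => Polynomial.C (φ c) * Polynomial.X ^ k).coeff j = φ (q.coeff j) := by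
  rw [Polynomial.sum]
  simp_rw [Polynomial.C_mul_X_pow_eq_monomial]
  rw [Polynomial.finset_sum_coeff]
  simp_rw [Polynomial.coeff_monomial]
  rw [Finset.sum_ite_eq' q.support j (fun i => φ (q.coeff i))]
  by_cases h : j ∈ q.support
  · rw [if_pos h]
  · rw [if_neg h, Polynomial.notMem_support_iff.mp h, hφ]

lemma coeff_nonnegY (q : RQ) (j : ℕ) : (nonnegY q).coeff j = nonnegL (q.coeff j) :=
  coeff_liftY nonnegL nonnegL_zero q j

/-- `slY k` : coefficientwise (in `y`) extraction of the `u^k` coefficient. -/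
noncomputable def slY (k : ℤ) (q : RQ) : RQ :=
  q.sum fun j c => Polynomial.C (slL k c) * Polynomial.X ^ j

lemma coeff_slY (k : ℤ) (q : RQ) (j : ℕ) : (slY k q).coeff j = slL k (q.coeff j) :=
  coeff_liftY (slL k) (slL_zero k) q j

lemma evalU0_eq_slY (q : RQ) : evalU0 q = slY 0 q := rfl

/-! ### power-series level -/

noncomputable def D (f : PowerSeries RQ) : PowerSeries RQ :=
  PowerSeries.mk fun n => Polynomial.derivative (PowerSeries.coeff n f)

lemma coeff_D (f : PowerSeries RQ) (n : ℕ) :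
    PowerSeries.coeff n (D f) = Polynomial.derivative (PowerSeries.coeff n f) :=
  coeff_mk _ _

lemma D_mul (f g : PowerSeries RQ) : D (f * g) = D f * g + f * D g := by
  apply PowerSeries.ext; intro n
  rw [coeff_D, coeff_mul, map_sum, map_add, coeff_mul, coeff_mul, ← Finset.sum_add_distrib]
  refine Finset.sum_congr rfl fun p _ => ?_
  rw [coeff_D, coeff_D, Polynomial.derivative_mul]

lemma D_C (a : RQ) : D (PowerSeries.C a) = PowerSeries.C (Polynomial.derivative a) := by
  apply PowerSeries.ext; intro n
  rw [coeff_D, coeff_C, coeff_C]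
  split <;> simp

lemma D_C_mul (a : RQ) (f : PowerSeries RQ) :
    D (PowerSeries.C a * f) = PowerSeries.C (Polynomial.derivative a) * f
      + PowerSeries.C a * D f := by
  rw [D_mul, D_C]

noncomputable def slS (k : ℤ) (f : PowerSeries RQ) : PowerSeries RQ :=
  PowerSeries.mk fun n => slY k (PowerSeries.coeff n f)

lemma coeff_slS (k : ℤ) (f : PowerSeries RQ) (n : ℕ) :
    PowerSeries.coeff n (slS k f) = slY k (PowerSeries.coeff n f) :=
  coeff_mk _ _


/-! expZ lemmas -/

lemma expZ_zero {A : Type*} [CommRing A] [Algebra ℚ A] : expZ (0 : A) = 1 := by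
  apply PowerSeries.ext; intro n
  rw [expZ, coeff_mk]
  cases n with
  | zero => simp
  | succ m => simp [zero_pow, coeff_one]

lemma map_expZ {A B : Type*} [CommRing A] [CommRing B] [Algebra ℚ A] [Algebra ℚ B]
    (f : A →+* B) (hf : ∀ (q : ℚ) (x : A), f (q • x) = q • f x) (c : A) :
    PowerSeries.map f (expZ c) = expZ (f c) := by
  apply PowerSeries.ext; intro n
  rw [expZ, expZ, coeff_map, coeff_mk, coeff_mk, hf, map_pow]

lemma D_expZ (c : RQ) :
    D (expZ c) = PowerSeries.X * PowerSeries.C (Polynomial.derivative c) * expZ c := by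
  apply PowerSeries.ext; intro n
  rw [coeff_D, expZ, coeff_mk, mul_assoc]
  cases n with
  | zero =>
    rw [coeff_zero_X_mul]
    simp
  | succ m =>
    rw [coeff_succ_X_mul, coeff_C_mul, coeff_mk, Polynomial.derivative_smul,
      Polynomial.derivative_pow, Nat.add_sub_cancel, Polynomial.C_eq_natCast,
      ← map_natCast (algebraMap ℚ (Polynomial (LaurentPolynomial ℚ))) (m+1),
      Algebra.algebraMap_eq_smul_one, smul_mul_assoc, smul_mul_assoc, one_mul, smul_smul,
      show ((m+1).factorial : ℚ)⁻¹ * (((m+1 : ℕ)) : ℚ) = (m.factorial : ℚ)⁻¹ by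
        rw [Nat.factorial_succ]; push_cast; field_simp,
      mul_smul_comm, mul_comm (c ^ m)]

/-! y-level structural lemmas -/

lemma nonnegY_sub (q r : RQ) : nonnegY (q - r) = nonnegY q - nonnegY r := by
  ext j
  rw [Polynomial.coeff_sub, coeff_nonnegY, coeff_nonnegY, coeff_nonnegY, Polynomial.coeff_sub,
    nonnegL_sub]

lemma nonnegY_add (q r : RQ) : nonnegY (q + r) = nonnegY q + nonnegY r := by
  ext j
  rw [Polynomial.coeff_add, coeff_nonnegY, coeff_nonnegY, coeff_nonnegY, Polynomial.coeff_add,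
    nonnegL_add]

lemma slY_sub (k : ℤ) (q r : RQ) : slY k (q - r) = slY k q - slY k r := by
  ext j
  rw [Polynomial.coeff_sub, coeff_slY, coeff_slY, coeff_slY, Polynomial.coeff_sub, slL_sub]

lemma nonnegY_Cu_mul (q : RQ) :
    nonnegY (Polynomial.C (T 1) * q)
      = Polynomial.C (T 1) * nonnegY q + slY (-1) q := by
  ext j
  rw [Polynomial.coeff_add, Polynomial.coeff_C_mul, coeff_nonnegY, coeff_nonnegY,
    Polynomial.coeff_C_mul, coeff_slY, nonnegL_T_one_mul]

lemma nonnegY_Cubar_mul (q : RQ) :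
    nonnegY (Polynomial.C (T (-1)) * q)
      = Polynomial.C (T (-1)) * nonnegY q - Polynomial.C (T (-1)) * slY 0 q := by
  ext j
  rw [Polynomial.coeff_sub, Polynomial.coeff_C_mul, coeff_nonnegY, coeff_nonnegY,
    Polynomial.coeff_C_mul, Polynomial.coeff_C_mul, coeff_slY, nonnegL_T_negone_mul, slL]

lemma slY_CT_mul (k a : ℤ) (q : RQ) :
    slY k (Polynomial.C (T a) * q) = slY (k - a) q := by
  ext j
  rw [coeff_slY, Polynomial.coeff_C_mul, coeff_slY, slL_T_mul]

lemma slY_zero_nonnegY (q : RQ) : slY 0 (nonnegY q) = slY 0 q := by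
  ext j
  rw [coeff_slY, coeff_nonnegY, coeff_slY, slL_zero_nonnegL]

lemma slY_negone_nonnegY (q : RQ) : slY (-1) (nonnegY q) = 0 := by
  ext j
  rw [coeff_slY, coeff_nonnegY, slL_negone_nonnegL, Polynomial.coeff_zero]

lemma derivative_nonnegY (q : RQ) :
    Polynomial.derivative (nonnegY q) = nonnegY (Polynomial.derivative q) := by
  ext j
  rw [Polynomial.coeff_derivative, coeff_nonnegY, coeff_nonnegY, Polynomial.coeff_derivative]
  rw [show ((j : LQ) + 1) = LaurentPolynomial.C ((j : ℚ) + 1) by simp]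
  rw [mul_C_comm]

/-! series-level structural lemmas -/

lemma coeff_nonnegS (f : PowerSeries RQ) (n : ℕ) :
    PowerSeries.coeff n (nonnegS f) = nonnegY (PowerSeries.coeff n f) :=
  coeff_mk _ _

lemma nonnegY_zero : nonnegY 0 = 0 := by
  apply Polynomial.ext; intro j
  rw [coeff_nonnegY, Polynomial.coeff_zero, nonnegL_zero]

lemma nonnegS_sub (f g : PowerSeries RQ) : nonnegS (f - g) = nonnegS f - nonnegS g := by
  apply PowerSeries.ext; intro n
  rw [map_sub, coeff_nonnegS, coeff_nonnegS, coeff_nonnegS, map_sub, nonnegY_sub]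

lemma nonnegS_add (f g : PowerSeries RQ) : nonnegS (f + g) = nonnegS f + nonnegS g := by
  apply PowerSeries.ext; intro n
  rw [map_add, coeff_nonnegS, coeff_nonnegS, coeff_nonnegS, map_add, nonnegY_add]

lemma slS_sub (k : ℤ) (f g : PowerSeries RQ) : slS k (f - g) = slS k f - slS k g := by
  apply PowerSeries.ext; intro n
  rw [map_sub, coeff_slS, coeff_slS, coeff_slS, map_sub, slY_sub]

lemma nonnegS_X_mul (f : PowerSeries RQ) :
    nonnegS (PowerSeries.X * f) = PowerSeries.X * nonnegS f := by
  apply PowerSeries.ext; intro n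
  cases n with
  | zero =>
    rw [coeff_zero_X_mul, coeff_nonnegS, coeff_zero_X_mul, nonnegY_zero]
  | succ m =>
    rw [coeff_succ_X_mul, coeff_nonnegS, coeff_nonnegS, coeff_succ_X_mul]

lemma nonnegS_Cu_mul (f : PowerSeries RQ) :
    nonnegS (PowerSeries.C (Polynomial.C (T 1)) * f)
      = PowerSeries.C (Polynomial.C (T 1)) * nonnegS f + slS (-1) f := by
  apply PowerSeries.ext; intro n
  rw [map_add, coeff_nonnegS, coeff_C_mul, coeff_C_mul, coeff_nonnegS, coeff_slS,
    nonnegY_Cu_mul]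

lemma nonnegS_Cubar_mul (f : PowerSeries RQ) :
    nonnegS (PowerSeries.C (Polynomial.C (T (-1))) * f)
      = PowerSeries.C (Polynomial.C (T (-1))) * nonnegS f
        - PowerSeries.C (Polynomial.C (T (-1))) * slS 0 f := by
  apply PowerSeries.ext; intro n
  rw [map_sub, coeff_nonnegS, coeff_C_mul, coeff_C_mul, coeff_C_mul, coeff_nonnegS, coeff_slS,
    nonnegY_Cubar_mul]

lemma slS_CT_mul (k a : ℤ) (f : PowerSeries RQ) :
    slS k (PowerSeries.C (Polynomial.C (T a)) * f) = slS (k - a) f := by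
  apply PowerSeries.ext; intro n
  rw [coeff_slS, coeff_C_mul, coeff_slS, slY_CT_mul]

lemma slS_zero_nonnegS (f : PowerSeries RQ) : slS 0 (nonnegS f) = slS 0 f := by
  apply PowerSeries.ext; intro n
  rw [coeff_slS, coeff_nonnegS, coeff_slS, slY_zero_nonnegY]

lemma slS_negone_nonnegS (f : PowerSeries RQ) : slS (-1) (nonnegS f) = 0 := by
  apply PowerSeries.ext; intro n
  rw [coeff_slS, coeff_nonnegS, slY_negone_nonnegY, map_zero]

lemma D_nonnegS (f : PowerSeries RQ) : D (nonnegS f) = nonnegS (D f) := by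
  apply PowerSeries.ext; intro n
  rw [coeff_D, coeff_nonnegS, coeff_nonnegS, coeff_D, derivative_nonnegY]



/-! σ layer -/

noncomputable def σR : RQ →+* RQ := Polynomial.mapRingHom (σL : LQ →+* LQ)

lemma coeff_σR (q : RQ) (j : ℕ) : (σR q).coeff j = σL (q.coeff j) := by
  rw [σR, Polynomial.coe_mapRingHom, Polynomial.coeff_map]; rfl

lemma σR_smul (q : ℚ) (x : RQ) : σR (q • x) = q • σR x := by
  apply Polynomial.ext; intro j
  rw [Polynomial.coeff_smul, coeff_σR, coeff_σR, Polynomial.coeff_smul, map_smul]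

lemma slY_σR (k : ℤ) (q : RQ) : slY k (σR q) = slY (-k) q := by
  apply Polynomial.ext; intro j
  rw [coeff_slY, coeff_slY, coeff_σR, slL_σL]

lemma slS_mapσ (k : ℤ) (f : PowerSeries RQ) :
    slS k (PowerSeries.map σR f) = slS (-k) f := by
  apply PowerSeries.ext; intro n
  rw [coeff_slS, coeff_slS, coeff_map, slY_σR]

lemma mapσ_expZ (c : RQ) :
    PowerSeries.map σR (expZ c) = expZ (σR c) :=
  map_expZ _ σR_smul c

/-! slL as an AddMonoidHom, and the "u-free" commuting lemma -/

noncomputable def slLadd (k : ℤ) : LQ →+ LQ where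
  toFun := slL k
  map_zero' := slL_zero k
  map_add' := slL_add k

lemma slL_const_mul (k : ℤ) (r : ℚ) (p : LQ) :
    slL k (LaurentPolynomial.C r * p) = LaurentPolynomial.C r * slL k p := by
  rw [mul_comm, slL_mul_C, mul_comm]

lemma smul_C (q r : ℚ) : q • (LaurentPolynomial.C r : LQ) = LaurentPolynomial.C (q * r) := by
  rw [Algebra.smul_def, ← LaurentPolynomial.C_eq_algebraMap, ← map_mul]

lemma slY_ufree_mul (k : ℤ) (a b : RQ)
    (ha : ∀ j, ∃ r : ℚ, a.coeff j = LaurentPolynomial.C r) :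
    slY k (a * b) = a * slY k b := by
  apply Polynomial.ext; intro j
  have hs : ∀ (s : Finset (ℕ × ℕ)) (F : ℕ × ℕ → LQ),
      slL k (∑ x ∈ s, F x) = ∑ x ∈ s, slL k (F x) := fun s F => map_sum (slLadd k) F s
  rw [coeff_slY, Polynomial.coeff_mul, Polynomial.coeff_mul, hs]
  refine Finset.sum_congr rfl fun p _ => ?_
  obtain ⟨r, hr⟩ := ha p.1
  show slL k (a.coeff p.1 * b.coeff p.2) = a.coeff p.1 * (slY k b).coeff p.2
  rw [coeff_slY, hr, slL_const_mul]

lemma slS_ufree_mul (k : ℤ) (g f : PowerSeries RQ)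
    (hg : ∀ n j, ∃ r : ℚ, (PowerSeries.coeff n g).coeff j = LaurentPolynomial.C r) :
    slS k (g * f) = g * slS k f := by
  apply PowerSeries.ext; intro n
  rw [coeff_slS, coeff_mul, coeff_mul]
  apply Polynomial.ext; intro j
  have hs : ∀ (s : Finset (ℕ × ℕ)) (F : ℕ × ℕ → LQ),
      slL k (∑ x ∈ s, F x) = ∑ x ∈ s, slL k (F x) := fun s F => map_sum (slLadd k) F s
  rw [coeff_slY, Polynomial.finset_sum_coeff, Polynomial.finset_sum_coeff, hs]
  refine Finset.sum_congr rfl fun p _ => ?_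
  show slL k ((PowerSeries.coeff p.1 g * PowerSeries.coeff p.2 f).coeff j)
    = (PowerSeries.coeff p.1 g * PowerSeries.coeff p.2 (slS k f)).coeff j
  rw [coeff_slS, ← coeff_slY, slY_ufree_mul k _ _ (hg p.1)]

lemma ufree_expZ2y : ∀ n j, ∃ r : ℚ,
    (PowerSeries.coeff n (expZ (2 * Polynomial.X : RQ))).coeff j = LaurentPolynomial.C r := by
  intro n j
  rw [expZ, coeff_mk, Polynomial.coeff_smul, mul_pow,
    show ((2 : RQ) ^ n) = Polynomial.C ((2 : LQ) ^ n) by rw [map_pow, map_ofNat],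
    Polynomial.coeff_C_mul, Polynomial.coeff_X_pow]
  by_cases h : j = n
  · refine ⟨(n.factorial : ℚ)⁻¹ * 2 ^ n, ?_⟩
    rw [if_pos h, mul_one, show ((2:LQ)^n) = LaurentPolynomial.C ((2:ℚ)^n) by
      rw [map_pow, map_ofNat], smul_C]
  · exact ⟨0, by rw [if_neg h, mul_zero, smul_zero, map_zero]⟩

/-! evaluation at y = 0 -/

lemma ev0_smul (q : ℚ) (x : RQ) :
    Polynomial.eval (0 : LQ) (q • x) = q • Polynomial.eval (0 : LQ) x := by
  rw [← Polynomial.coeff_zero_eq_eval_zero, ← Polynomial.coeff_zero_eq_eval_zero,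
    Polynomial.coeff_smul]

lemma ev0_nonnegY (q : RQ) :
    Polynomial.eval (0 : LQ) (nonnegY q) = nonnegL (Polynomial.eval (0 : LQ) q) := by
  rw [← Polynomial.coeff_zero_eq_eval_zero, ← Polynomial.coeff_zero_eq_eval_zero, coeff_nonnegY]

/-! support lemmas for nonnegL -/

lemma nonnegL_eq_self (p : LQ) (h : ∀ m : ℤ, m < 0 → p.coeff m = 0) : nonnegL p = p := by
  ext m
  rw [nonnegL_apply]
  split_ifs with hm
  · rfl
  · exact (h m (by omega)).symm

lemma nonnegL_eq_zero (p : LQ) (h : ∀ m : ℤ, 0 ≤ m → p.coeff m = 0) : nonnegL p = 0 := by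
  ext m
  rw [nonnegL_apply]
  simp only [AddMonoidAlgebra.coeff_zero, Finsupp.coe_zero, Pi.zero_apply]
  split_ifs with hm
  · exact h m hm
  · rfl



noncomputable def uu : RQ := Polynomial.C (T 1)
noncomputable def ub : RQ := Polynomial.C (T (-1))
noncomputable def yy : RQ := Polynomial.X
noncomputable def AA : RQ := uu * (yy - 1) + yy * ub
noncomputable def BB : RQ := ub * (yy - 1) + yy * uu
noncomputable def FF : PowerSeries RQ := expZ AA - PowerSeries.C ub * expZ BB
noncomputable def GG : PowerSeries RQ :=
  PowerSeries.C (1 + uu) * expZ (2 * yy) * nonnegS FF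

/-! ### Part (i) : evaluation at y = 0 -/

noncomputable def ev0 : RQ →+* LQ := Polynomial.evalRingHom (0 : LQ)

lemma ev0_apply (q : RQ) : ev0 q = Polynomial.eval 0 q := rfl

lemma neg_T_pow (a : ℤ) (n : ℕ) :
    (-(T a : LQ)) ^ n = LaurentPolynomial.C ((-1 : ℚ) ^ n) * T (n * a) := by
  rw [neg_pow, T_pow, show ((-1 : LQ)) = LaurentPolynomial.C (-1 : ℚ) by
    rw [map_neg, map_one], ← map_pow]

lemma CT_apply (r : ℚ) (a m : ℤ) :
    (LaurentPolynomial.C r * T a : LQ).coeff m = if a = m then r else 0 := by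
  rw [← single_eq_C_mul_T, AddMonoidAlgebra.coeff_single, Finsupp.single_apply]

lemma smul_apply' (q : ℚ) (p : LQ) (m : ℤ) : (q • p).coeff m = q * p.coeff m := by
  rw [AddMonoidAlgebra.coeff_smul, Finsupp.smul_apply, smul_eq_mul]

lemma part1 :
    (PowerSeries.mk fun n => Polynomial.eval 0 (PowerSeries.coeff n GG))
      = PowerSeries.C (1 + LaurentPolynomial.T 1) * expZ (-(LaurentPolynomial.T 1)) := by
  have hmk : (PowerSeries.mk fun n => Polynomial.eval 0 (PowerSeries.coeff n GG))
      = PowerSeries.map ev0 GG := by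
    apply PowerSeries.ext; intro n
    rw [coeff_mk, coeff_map, ev0_apply]
  rw [hmk, GG, map_mul, map_mul, PowerSeries.map_C]
  have h1 : ev0 (1 + uu) = 1 + T 1 := by
    rw [ev0_apply, uu]; simp
  have h2 : PowerSeries.map ev0 (expZ (2 * yy)) = 1 := by
    rw [map_expZ ev0 ev0_smul, show ev0 (2 * yy) = 0 by rw [ev0_apply, yy]; simp, expZ_zero]
  have hFF : PowerSeries.map ev0 FF
      = expZ (-(T 1)) - PowerSeries.C (T (-1)) * expZ (-(T (-1))) := by
    rw [FF, map_sub, map_mul, PowerSeries.map_C, map_expZ ev0 ev0_smul,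
      map_expZ ev0 ev0_smul]
    rw [show ev0 AA = -(T 1) by rw [ev0_apply, AA, uu, ub, yy]; simp,
      show ev0 BB = -(T (-1)) by rw [ev0_apply, BB, uu, ub, yy]; simp,
      show ev0 ub = T (-1) by rw [ev0_apply, ub]; simp]
  have h3 : PowerSeries.map ev0 (nonnegS FF) = expZ (-(T 1)) := by
    apply PowerSeries.ext; intro n
    rw [coeff_map, coeff_nonnegS, ev0_apply, ev0_nonnegY]
    have : Polynomial.eval 0 (PowerSeries.coeff n FF)
        = PowerSeries.coeff n (PowerSeries.map ev0 FF) := by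
      rw [coeff_map, ev0_apply]
    rw [this, hFF, map_sub, nonnegL_sub]
    have ha : nonnegL (PowerSeries.coeff n (expZ (-(T 1) : LQ)))
        = PowerSeries.coeff n (expZ (-(T 1) : LQ)) := by
      apply nonnegL_eq_self
      intro m hm
      rw [expZ, coeff_mk, neg_T_pow, smul_apply', CT_apply,
        if_neg (by omega), mul_zero]
    have hb : nonnegL (PowerSeries.coeff n
        (PowerSeries.C (T (-1)) * expZ (-(T (-1)) : LQ))) = 0 := by
      apply nonnegL_eq_zero
      intro m hm
      rw [coeff_C_mul, expZ, coeff_mk, T_mul_apply, smul_apply', neg_T_pow, CT_apply,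
        show ((n : ℤ) * (-1)) = -(n : ℤ) by ring, if_neg (by omega), mul_zero]
    rw [ha, hb, sub_zero]
  rw [h1, h2, h3, mul_one]

/-! ### Part (ii) -/

lemma slY_add (k : ℤ) (q r : Polynomial (LaurentPolynomial ℚ)) :
    slY k (q + r) = slY k q + slY k r := by
  apply Polynomial.ext; intro j
  rw [Polynomial.coeff_add, coeff_slY, coeff_slY, coeff_slY, Polynomial.coeff_add, slL_add]

lemma slS_add (k : ℤ) (f g : PowerSeries (Polynomial (LaurentPolynomial ℚ))) :
    slS k (f + g) = slS k f + slS k g := by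
  apply PowerSeries.ext; intro n
  rw [map_add, coeff_slS, coeff_slS, coeff_slS, map_add, slY_add]

lemma uu_mul_ub : uu * ub = (1 : RQ) := by
  rw [uu, ub, ← map_mul, ← T_add]
  norm_num

lemma D_sub (f g : PowerSeries RQ) : D (f - g) = D f - D g := by
  apply PowerSeries.ext; intro n
  simp only [coeff_D, map_sub]

lemma deriv_AA : Polynomial.derivative AA = uu + ub := by
  rw [AA, uu, ub, yy]; simp

lemma deriv_BB : Polynomial.derivative BB = uu + ub := by
  rw [BB, uu, ub, yy]; simp [add_comm]

lemma D_FF : D FF = PowerSeries.X * PowerSeries.C (uu + ub) * FF := by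
  rw [FF, D_sub, D_expZ, D_C_mul, D_expZ, deriv_AA, deriv_BB,
    show Polynomial.derivative ub = 0 by rw [ub]; simp, map_zero, zero_mul, zero_add]
  ring

lemma σR_AA : σR AA = BB := by
  rw [AA, BB, uu, ub, yy, σR]
  simp only [map_add, map_mul, map_sub, map_one, Polynomial.coe_mapRingHom,
    Polynomial.map_C, Polynomial.map_X, Polynomial.map_one, Polynomial.map_add,
    Polynomial.map_mul, Polynomial.map_sub]
  rw [show (σL : LQ →+* LQ) (T 1) = T (-1) from σL_T 1,
    show (σL : LQ →+* LQ) (T (-1)) = T 1 by rw [show ((σL : LQ →+* LQ) (T (-1))) = T (-(-1)) from σL_T (-1)]; norm_num]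

lemma expZ_BB : expZ BB = PowerSeries.map σR (expZ AA) := by
  rw [mapσ_expZ, σR_AA]

lemma slSneg1_FF : slS (-1) FF = - slS 0 FF := by
  have h1 : slS (-1) (PowerSeries.C ub * expZ BB) = slS 0 (expZ BB) := by
    have := slS_CT_mul (-1) (-1) (expZ BB)
    norm_num at this
    rw [ub, this]
  have h2 : slS 0 (PowerSeries.C ub * expZ BB) = slS 1 (expZ BB) := by
    have := slS_CT_mul 0 (-1) (expZ BB)
    norm_num at this
    rw [ub, this]
  have h3 : slS 0 (expZ BB) = slS 0 (expZ AA) := by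
    have h := slS_mapσ 0 (expZ AA)
    norm_num at h
    rw [expZ_BB, h]
  have h4 : slS 1 (expZ BB) = slS (-1) (expZ AA) := by
    rw [expZ_BB, show (1 : ℤ) = -(-1) by norm_num, slS_mapσ]
  rw [FF, slS_sub, slS_sub, h1, h2, h3, h4]
  abel

lemma D_nonnegS_FF :
    D (nonnegS FF) = PowerSeries.X * (PowerSeries.C (uu + ub) * nonnegS FF
      - PowerSeries.C (1 + ub) * slS 0 FF) := by
  rw [D_nonnegS, D_FF, mul_assoc, nonnegS_X_mul]
  congr 1
  rw [map_add, add_mul, nonnegS_add]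
  rw [show (PowerSeries.C uu) = PowerSeries.C (Polynomial.C (T 1)) by rw [uu],
    show (PowerSeries.C ub) = PowerSeries.C (Polynomial.C (T (-1))) by rw [ub],
    nonnegS_Cu_mul, nonnegS_Cubar_mul, slSneg1_FF]
  rw [map_add, map_one, ub]
  ring

lemma ufree2yy : ∀ n j, ∃ r : ℚ,
    (PowerSeries.coeff n (expZ (2 * yy))).coeff j = LaurentPolynomial.C r := by
  rw [yy]; exact ufree_expZ2y

lemma slS0_GG : slS 0 GG = expZ (2 * yy) * slS 0 FF := by
  have hGG : GG = expZ (2 * yy) * nonnegS FF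
      + PowerSeries.C (Polynomial.C (T 1)) * (expZ (2 * yy) * nonnegS FF) := by
    rw [GG, map_add, map_one, ← uu]; ring
  rw [hGG, slS_add]
  have h1 : slS 0 (expZ (2 * yy) * nonnegS FF) = expZ (2 * yy) * slS 0 FF := by
    rw [slS_ufree_mul 0 _ _ ufree2yy, slS_zero_nonnegS]
  have h2 : slS 0 (PowerSeries.C (Polynomial.C (T 1)) * (expZ (2 * yy) * nonnegS FF))
      = 0 := by
    have := slS_CT_mul 0 1 (expZ (2 * yy) * nonnegS FF)
    norm_num at this
    rw [this, slS_ufree_mul (-1) _ _ ufree2yy, slS_negone_nonnegS, mul_zero]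
  rw [h1, h2, add_zero]

lemma part2 :
    (PowerSeries.mk fun n => Polynomial.derivative (PowerSeries.coeff n GG))
      = PowerSeries.X * PowerSeries.C ((1 + uu) * (1 + ub)) *
          (GG - PowerSeries.mk fun n => evalU0 (PowerSeries.coeff n GG)) := by
  have hD : (PowerSeries.mk fun n => Polynomial.derivative (PowerSeries.coeff n GG))
      = D GG := rfl
  have hU0 : (PowerSeries.mk fun n => evalU0 (PowerSeries.coeff n GG)) = slS 0 GG := by
    apply PowerSeries.ext; intro n
    rw [coeff_mk, coeff_slS, evalU0_eq_slY]
  rw [hD, hU0, slS0_GG]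
  have e1 : GG = PowerSeries.C (1 + uu) * (expZ (2 * yy) * nonnegS FF) := by
    rw [GG, mul_assoc]
  rw [e1, D_C_mul, show Polynomial.derivative (1 + uu) = 0 by rw [uu]; simp, map_zero,
    zero_mul, zero_add, D_mul, D_expZ (2 * yy),
    show Polynomial.derivative (2 * yy) = 2 by rw [yy]; simp,
    D_nonnegS_FF]
  have hCuub : PowerSeries.C uu * PowerSeries.C ub = 1 := by
    rw [← map_mul, uu_mul_ub, map_one]
  simp only [map_add, map_mul, map_one, map_ofNat]
  linear_combination
    (-(PowerSeries.X * expZ (2 * yy) * (1 + PowerSeries.C uu) * nonnegS FF)) * hCuub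

end StmtAux
theorem stmt_19 :
    let R := Polynomial (LaurentPolynomial ℚ)
    let u : R := Polynomial.C (LaurentPolynomial.T 1)
    let ubar : R := Polynomial.C (LaurentPolynomial.T (-1))
    let y : R := Polynomial.X
    -- G(u,y) = (1+u)·e^{2yz}·[u^≥]( e^{zu(y-1)+zy/u} − (1/u)·e^{z(y-1)/u+zyu} )
    let G : PowerSeries R :=
      PowerSeries.C (1 + u) * expZ (2 * y) *
        nonnegS (expZ (u * (y - 1) + y * ubar)
          - PowerSeries.C ubar * expZ (ubar * (y - 1) + y * u))
    -- (i) initial condition G(u,0) = (1+u)·e^{-zu}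
    ((PowerSeries.mk fun n => Polynomial.eval 0 (PowerSeries.coeff n G))
        = PowerSeries.C (1 + LaurentPolynomial.T 1) *
            expZ (-(LaurentPolynomial.T 1))) ∧
    -- (ii) ∂G/∂y = z(1+u)(1+1/u)·(G(u,y) − G(0,y))
    ((PowerSeries.mk fun n => Polynomial.derivative (PowerSeries.coeff n G))
        = PowerSeries.X * PowerSeries.C ((1 + u) * (1 + ubar)) *
            (G - PowerSeries.mk fun n => evalU0 (PowerSeries.coeff n G))) := by
  intro R u ubar y G
  exact ⟨StmtAux.part1, StmtAux.part2⟩
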